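/- For every finite nonempty set A of integers (or in any abelian group), |kA| ≥ |A - A|^{1 - 2^{-k}}, where kA denotes the k-fold sumset A + ... + A. -/

import Mathlib

open Pointwise

theorem stmt_0 {G : Type*} [AddCommGroup G] [DecidableEq G]
    (A : Finset G) (hA : A.Nonempty) (k : ℕ) (hk : 1 ≤ k) :
    ((A - A).card : ℝ) ^ ((1 : ℝ) - 2 ^ (-(k : ℝ))) ≤ ((k • A).card : ℝ) := by
  induction k with
  | zero => omega
  | succ n ih =>
    have hD : (0:ℝ) < (A - A).card := by
      exact_mod_cast Finset.card_pos.2 (hA.sub hA)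
    rcases Nat.eq_or_lt_of_le hk with h1 | h1
    · -- base case k = 1
      have hsub : ((A - A).card : ℝ) ≤ (A.card : ℝ) * A.card := by
        exact_mod_cast Finset.card_sub_le
      have h1' : (1:ℕ) = n + 1 := h1
      have : ((A - A).card : ℝ) ^ ((1:ℝ) - 2 ^ (-(1:ℝ))) ≤ (A.card : ℝ) := by
        have : ((A - A).card : ℝ) ^ ((1:ℝ)/2) ≤ ((A.card : ℝ)^(2:ℕ)) ^ ((1:ℝ)/2) := by
          apply Real.rpow_le_rpow hD.le (by nlinarith) (by norm_num)
        calc ((A - A).card : ℝ) ^ ((1:ℝ) - 2 ^ (-(1:ℝ))) 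
            = ((A - A).card : ℝ) ^ ((1:ℝ)/2) := by norm_num
          _ ≤ ((A.card : ℝ)^(2:ℕ)) ^ ((1:ℝ)/2) := this
          _ = (A.card : ℝ) := by
              rw [← Real.rpow_natCast (A.card : ℝ) 2, ← Real.rpow_mul (x := (A.card : ℝ)) (Nat.cast_nonneg _)]
              norm_num
      rw [← h1'] at *
      simpa [one_smul] using this
    · -- inductive step: n ≥ 1
      have hn : 1 ≤ n := by omega
      have ihn := ih hn
      -- Ruzsa: #(A-A) * #(n•A) ≤ #((n+1)•A)^2
      have hruzsa : ((A - A).card : ℝ) * ((n • A).card : ℝ)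
          ≤ (((n+1) • A).card : ℝ) ^ (2:ℕ) := by
        have := Finset.ruzsa_triangle_inequality_sub_add_add A (n • A) A
        have heq : A + n • A = (n+1) • A := by
          rw [succ_nsmul, add_comm]
        rw [heq] at this
        calc ((A - A).card : ℝ) * ((n • A).card : ℝ)
            ≤ (((n+1) • A).card : ℝ) * (((n+1) • A).card : ℝ) := by exact_mod_cast this
          _ = (((n+1) • A).card : ℝ) ^ (2:ℕ) := by ring
      set D : ℝ := ((A - A).card : ℝ)
      have key : D ^ ((2:ℝ) - 2 ^ (-(n : ℝ))) ≤ (((n+1) • A).card : ℝ) ^ (2:ℕ) := by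
        calc D ^ ((2:ℝ) - 2 ^ (-(n : ℝ))) = D ^ ((1:ℝ) + ((1:ℝ) - 2 ^ (-(n : ℝ)))) := by
              ring_nf
          _ = D * D ^ ((1:ℝ) - 2 ^ (-(n : ℝ))) := by
              rw [Real.rpow_add hD, Real.rpow_one]
          _ ≤ D * ((n • A).card : ℝ) := by
              exact mul_le_mul_of_nonneg_left ihn hD.le
          _ ≤ _ := hruzsa
      have h2 : D ^ ((1:ℝ) - 2 ^ (-((n:ℝ)+1))) 
          = (D ^ ((2:ℝ) - 2 ^ (-(n : ℝ)))) ^ ((1:ℝ)/2) := by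
        rw [← Real.rpow_mul hD.le]
        congr 1
        rw [show -((n:ℝ)+1) = (-(n:ℝ)) + (-1) by ring,
          Real.rpow_add (by norm_num : (0:ℝ) < 2), Real.rpow_neg_one]
        ring
      rw [Nat.cast_succ, h2]
      calc (D ^ ((2:ℝ) - 2 ^ (-(n : ℝ)))) ^ ((1:ℝ)/2) 
          ≤ ((((n+1) • A).card : ℝ) ^ (2:ℕ)) ^ ((1:ℝ)/2) :=
            Real.rpow_le_rpow (by positivity) key (by norm_num)
        _ = (((n+1) • A).card : ℝ) := by
            rw [← Real.rpow_natCast _ 2, ← Real.rpow_mul (by positivity)]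
            norm_num
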